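/- Let A = (a_{k,j}) be an infinite matrix of nonnegative reals with sup_j ∑_k a_{k,j} ≤ C and sup_k ∑_j a_{k,j} ≤ C. Then for bounded operators c_k on a Hilbert space, ‖∑_{k,j} a_{k,j} c_k* c_j‖ ≤ C ‖∑_k c_k* c_k‖ (sums over a finite index set), i.e. the Schur-test bound holds for operator coefficients. -/

import Mathlib

set_option maxHeartbeats 1000000 in
theorem schur_test_operator_coeffs {H : Type*} [NormedAddCommGroup H]
    [InnerProductSpace ℂ H] [CompleteSpace H]
    {ι : Type*} (s : Finset ι) (a : ι → ι → ℝ) (ha : ∀ k j, 0 ≤ a k j)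
    (C : ℝ) (hrow : ∀ j, (∑ k ∈ s, a k j) ≤ C) (hcol : ∀ k, (∑ j ∈ s, a k j) ≤ C)
    (c : ι → H →L[ℂ] H) :
    ‖∑ k ∈ s, ∑ j ∈ s, a k j • (ContinuousLinearMap.adjoint (c k) ∘L c j)‖ ≤
      C * ‖∑ k ∈ s, ContinuousLinearMap.adjoint (c k) ∘L c k‖ := by
  classical
  rcases isEmpty_or_nonempty ι with hι | ⟨⟨k0⟩⟩
  · have : s = ∅ := Finset.eq_empty_of_isEmpty s
    simp [this]
  have hC : 0 ≤ C := le_trans (Finset.sum_nonneg fun j _ => ha k0 j) (hcol k0)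
  set T := ∑ k ∈ s, ∑ j ∈ s, a k j • (ContinuousLinearMap.adjoint (c k) ∘L c j) with hT
  set S := ∑ k ∈ s, ContinuousLinearMap.adjoint (c k) ∘L c k with hS
  set M := ‖S‖ with hM
  have hM0 : 0 ≤ M := norm_nonneg _
  -- Step 1: ∑ ‖c k x‖² ≤ M ‖x‖²
  have key1 : ∀ x : H, (∑ k ∈ s, ‖c k x‖ ^ 2) ≤ M * ‖x‖ ^ 2 := by
    intro x
    have h1 : ((∑ k ∈ s, ‖c k x‖ ^ 2 : ℝ) : ℂ) = inner ℂ x (S x) := by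
      rw [hS, ContinuousLinearMap.sum_apply, inner_sum]
      push_cast
      refine Finset.sum_congr rfl fun k _ => ?_
      rw [Function.comp_apply, ContinuousLinearMap.adjoint_inner_right,
        inner_self_eq_norm_sq_to_K]
      rfl
    have h2 : (∑ k ∈ s, ‖c k x‖ ^ 2 : ℝ) = ‖(inner ℂ x (S x) : ℂ)‖ := by
      rw [← h1, Complex.norm_real, Real.norm_eq_abs,
        abs_of_nonneg (Finset.sum_nonneg fun k _ => sq_nonneg _)]
    calc (∑ k ∈ s, ‖c k x‖ ^ 2 : ℝ) = ‖(inner ℂ x (S x) : ℂ)‖ := h2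
      _ ≤ ‖x‖ * ‖S x‖ := norm_inner_le_norm _ _
      _ ≤ ‖x‖ * (M * ‖x‖) := by
          gcongr
          exact S.le_opNorm x
      _ = M * ‖x‖ ^ 2 := by ring
  -- Step 2: |⟪x, T y⟫| ≤ C M ‖x‖ ‖y‖
  have key2 : ∀ x y : H, ‖(inner ℂ x (T y) : ℂ)‖ ≤ C * M * (‖x‖ * ‖y‖) := by
    intro x y
    have hexp : (inner ℂ x (T y) : ℂ)
        = ∑ k ∈ s, ∑ j ∈ s, (a k j : ℂ) * inner ℂ (c k x) (c j y) := by
      rw [hT]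
      simp only [ContinuousLinearMap.sum_apply, inner_sum, ContinuousLinearMap.smul_apply,
        ContinuousLinearMap.comp_apply, ContinuousLinearMap.adjoint_inner_right]
      refine Finset.sum_congr rfl fun k _ => Finset.sum_congr rfl fun j _ => ?_
      rw [show (a k j • ((ContinuousLinearMap.adjoint (c k)) ((c j) y))) =
        ((a k j : ℂ)) • ((ContinuousLinearMap.adjoint (c k)) ((c j) y)) from
        (Complex.coe_smul _ _).symm, inner_smul_right,
        ContinuousLinearMap.adjoint_inner_right]
    have step1 : ‖(inner ℂ x (T y) : ℂ)‖
        ≤ ∑ p ∈ s ×ˢ s, (Real.sqrt (a p.1 p.2) * ‖c p.1 x‖) *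
            (Real.sqrt (a p.1 p.2) * ‖c p.2 y‖) := by
      rw [hexp, ← Finset.sum_product']
      refine (norm_sum_le _ _).trans (Finset.sum_le_sum fun p _ => ?_)
      rw [norm_mul, Complex.norm_real, Real.norm_eq_abs, abs_of_nonneg (ha _ _)]
      have : Real.sqrt (a p.1 p.2) * ‖c p.1 x‖ * (Real.sqrt (a p.1 p.2) * ‖c p.2 y‖)
          = a p.1 p.2 * (‖c p.1 x‖ * ‖c p.2 y‖) := by
        rw [show Real.sqrt (a p.1 p.2) * ‖c p.1 x‖ * (Real.sqrt (a p.1 p.2) * ‖c p.2 y‖)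
          = (Real.sqrt (a p.1 p.2) * Real.sqrt (a p.1 p.2)) * (‖c p.1 x‖ * ‖c p.2 y‖) by ring,
          Real.mul_self_sqrt (ha _ _)]
      rw [this]
      gcongr
      · exact ha _ _
      exact norm_inner_le_norm (𝕜 := ℂ) _ _
    have cs := Real.sum_mul_le_sqrt_mul_sqrt (s ×ˢ s)
      (fun p => Real.sqrt (a p.1 p.2) * ‖c p.1 x‖)
      (fun p => Real.sqrt (a p.1 p.2) * ‖c p.2 y‖)
    have hfx : (∑ p ∈ s ×ˢ s, (Real.sqrt (a p.1 p.2) * ‖c p.1 x‖) ^ 2) ≤ C * (M * ‖x‖ ^ 2) := by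
      have : (∑ p ∈ s ×ˢ s, (Real.sqrt (a p.1 p.2) * ‖c p.1 x‖) ^ 2)
          = ∑ k ∈ s, (∑ j ∈ s, a k j) * ‖c k x‖ ^ 2 := by
        rw [Finset.sum_product]
        refine Finset.sum_congr rfl fun k _ => ?_
        rw [Finset.sum_mul]
        refine Finset.sum_congr rfl fun j _ => ?_
        rw [mul_pow, Real.sq_sqrt (ha _ _)]
      rw [this]
      calc ∑ k ∈ s, (∑ j ∈ s, a k j) * ‖c k x‖ ^ 2
          ≤ ∑ k ∈ s, C * ‖c k x‖ ^ 2 := by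
            refine Finset.sum_le_sum fun k _ => ?_
            exact mul_le_mul_of_nonneg_right (hcol k) (sq_nonneg _)
        _ = C * ∑ k ∈ s, ‖c k x‖ ^ 2 := by rw [Finset.mul_sum]
        _ ≤ C * (M * ‖x‖ ^ 2) := mul_le_mul_of_nonneg_left (key1 x) hC
    have hfy : (∑ p ∈ s ×ˢ s, (Real.sqrt (a p.1 p.2) * ‖c p.2 y‖) ^ 2) ≤ C * (M * ‖y‖ ^ 2) := by
      have : (∑ p ∈ s ×ˢ s, (Real.sqrt (a p.1 p.2) * ‖c p.2 y‖) ^ 2)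
          = ∑ j ∈ s, (∑ k ∈ s, a k j) * ‖c j y‖ ^ 2 := by
        rw [Finset.sum_product_right]
        refine Finset.sum_congr rfl fun j _ => ?_
        rw [Finset.sum_mul]
        refine Finset.sum_congr rfl fun k _ => ?_
        rw [mul_pow, Real.sq_sqrt (ha _ _)]
      rw [this]
      calc ∑ j ∈ s, (∑ k ∈ s, a k j) * ‖c j y‖ ^ 2
          ≤ ∑ j ∈ s, C * ‖c j y‖ ^ 2 := by
            refine Finset.sum_le_sum fun j _ => ?_
            exact mul_le_mul_of_nonneg_right (hrow j) (sq_nonneg _)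
        _ = C * ∑ j ∈ s, ‖c j y‖ ^ 2 := by rw [Finset.mul_sum]
        _ ≤ C * (M * ‖y‖ ^ 2) := mul_le_mul_of_nonneg_left (key1 y) hC
    calc ‖(inner ℂ x (T y) : ℂ)‖
        ≤ ∑ p ∈ s ×ˢ s, (Real.sqrt (a p.1 p.2) * ‖c p.1 x‖) *
            (Real.sqrt (a p.1 p.2) * ‖c p.2 y‖) := step1
      _ ≤ Real.sqrt (∑ p ∈ s ×ˢ s, (Real.sqrt (a p.1 p.2) * ‖c p.1 x‖) ^ 2) *
          Real.sqrt (∑ p ∈ s ×ˢ s, (Real.sqrt (a p.1 p.2) * ‖c p.2 y‖) ^ 2) := cs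
      _ ≤ Real.sqrt (C * (M * ‖x‖ ^ 2)) * Real.sqrt (C * (M * ‖y‖ ^ 2)) :=
          mul_le_mul (Real.sqrt_le_sqrt hfx) (Real.sqrt_le_sqrt hfy) (Real.sqrt_nonneg _)
            (Real.sqrt_nonneg _)
      _ = C * M * (‖x‖ * ‖y‖) := by
          rw [← Real.sqrt_mul (by positivity)]
          rw [show C * (M * ‖x‖ ^ 2) * (C * (M * ‖y‖ ^ 2))
            = (C * M * (‖x‖ * ‖y‖)) ^ 2 by ring]
          exact Real.sqrt_sq (by positivity)
  -- Step 3: conclude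
  have key3 : ∀ y : H, ‖T y‖ ≤ C * M * ‖y‖ := by
    intro y
    rcases eq_or_lt_of_le (norm_nonneg (T y)) with h | h
    · rw [← h]; positivity
    have h2 : ‖T y‖ * ‖T y‖ ≤ (C * M * ‖y‖) * ‖T y‖ := by
      have hin : (inner ℂ (T y) (T y) : ℂ) = (‖T y‖ : ℂ) ^ 2 := inner_self_eq_norm_sq_to_K _
      calc ‖T y‖ * ‖T y‖ = ‖(inner ℂ (T y) (T y) : ℂ)‖ := by
            rw [hin, norm_pow, Complex.norm_real, norm_norm, sq]
        _ ≤ C * M * (‖T y‖ * ‖y‖) := key2 (T y) y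
        _ = (C * M * ‖y‖) * ‖T y‖ := by ring
    exact le_of_mul_le_mul_right h2 h
  exact T.opNorm_le_bound (by positivity) key3
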